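/- Let Γ be a profinite group, ρ : Γ → ∏_{ℓ∈L} G_ℓ a continuous homomorphism into a product of profinite groups, and for each ℓ let A_ℓ be a closed normal subgroup of G_ℓ with A_ℓ ⊆ ρ(Γ) (viewing A_ℓ inside the ℓ-th factor). Suppose the composite Γ → ∏ G_ℓ → ∏ (G_ℓ/A_ℓ) is surjective. Then ρ is surjective onto ∏ G_ℓ. -/

import Mathlib

/-- Evaluation of a finite product of `Pi.mulSingle`s. -/
lemma noncommProd_mulSingle_apply {L : Type*} [DecidableEq L] {G : L → Type*}
    [∀ ℓ, Monoid (G ℓ)] (a : ∀ ℓ, G ℓ) (s : Finset L)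
    (comm : (s : Set L).Pairwise fun i j =>
      Commute (Pi.mulSingle i (a i)) (Pi.mulSingle j (a j)))
    (ℓ : L) :
    (s.noncommProd (fun i => Pi.mulSingle i (a i)) comm) ℓ
      = if ℓ ∈ s then a ℓ else 1 := by
  induction s using Finset.induction with
  | empty => simp
  | @insert j s hj ih =>
    rw [Finset.noncommProd_insert_of_notMem _ _ _ _ hj, Pi.mul_apply,
      ih (comm.mono (Finset.coe_subset.mpr (Finset.subset_insert j s)))]
    rcases eq_or_ne ℓ j with rfl | hne
    · simp [Pi.mulSingle_eq_same, hj]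
    · simp [Pi.mulSingle_eq_of_ne hne, hne, Finset.mem_insert]

/-- §8.5 of Serre's proof of Theorem 1: if `ρ : Γ → ∏ G_ℓ` has image containing each
`A_ℓ` (a closed normal subgroup of `G_ℓ`, viewed in the `ℓ`-th factor) and the composite
`Γ → ∏ G_ℓ → ∏ G_ℓ/A_ℓ` is surjective, then `ρ` is surjective. -/
theorem stmt_18 {Γ : Type*} [Group Γ] [TopologicalSpace Γ] [IsTopologicalGroup Γ]
    [CompactSpace Γ] [T2Space Γ] [TotallyDisconnectedSpace Γ]
    {L : Type*} [DecidableEq L] {G : L → Type*} [∀ ℓ, Group (G ℓ)]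
    [∀ ℓ, TopologicalSpace (G ℓ)] [∀ ℓ, IsTopologicalGroup (G ℓ)]
    [∀ ℓ, CompactSpace (G ℓ)] [∀ ℓ, T2Space (G ℓ)]
    [∀ ℓ, TotallyDisconnectedSpace (G ℓ)]
    (ρ : Γ →* ∀ ℓ, G ℓ) (hρ : Continuous ρ)
    (A : ∀ ℓ, Subgroup (G ℓ)) (hAnormal : ∀ ℓ, (A ℓ).Normal)
    (hAclosed : ∀ ℓ, IsClosed (A ℓ : Set (G ℓ)))
    (hAsub : ∀ ℓ, ∀ a ∈ A ℓ, Pi.mulSingle ℓ a ∈ ρ.range)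
    (hquot : Function.Surjective
      (fun γ ℓ => QuotientGroup.mk (ρ γ ℓ) : Γ → ∀ ℓ, G ℓ ⧸ A ℓ)) :
    Function.Surjective ρ := by
  -- the range is closed
  have hclosed : IsClosed (Set.range ρ) :=
    (isCompact_range hρ).isClosed
  -- key: every element of the full product of the A ℓ is in the range
  have key : ∀ a : ∀ ℓ, G ℓ, (∀ ℓ, a ℓ ∈ A ℓ) → a ∈ ρ.range := by
    intro a ha
    have : a ∈ closure (Set.range ρ) := by
      rw [mem_closure_iff]
      intro U hU haU
      rcases isOpen_pi_iff.mp hU a haU with ⟨I, u, hu, hsub⟩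
      have comm : (I : Set L).Pairwise fun i j =>
          Commute (Pi.mulSingle i (a i)) (Pi.mulSingle j (a j)) :=
        fun i _ j _ hij => Pi.mulSingle_commute hij _ _
      refine ⟨I.noncommProd (fun i => Pi.mulSingle i (a i)) comm, hsub ?_, ?_⟩
      · intro i hi
        rw [noncommProd_mulSingle_apply, if_pos (Finset.mem_coe.mp hi)]
        exact (hu i hi).2
      · exact Subgroup.noncommProd_mem ρ.range comm
          (fun i _ => hAsub i (a i) (ha i))
    rwa [hclosed.closure_eq] at this
  intro x
  obtain ⟨γ, hγ⟩ := hquot (fun ℓ => QuotientGroup.mk (x ℓ))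
  have ha : ∀ ℓ, (ρ γ ℓ)⁻¹ * x ℓ ∈ A ℓ := by
    intro ℓ
    have := congrFun hγ ℓ
    exact QuotientGroup.eq.mp this
  obtain ⟨δ, hδ⟩ := key (fun ℓ => (ρ γ ℓ)⁻¹ * x ℓ) ha
  refine ⟨γ * δ, ?_⟩
  rw [map_mul, hδ]
  funext ℓ
  simp
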